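/- Let α = (α₀,α₁,α₂) ∈ ℕ³ and β₂ ∈ ℕ with β₂ ≤ α₀ + α₁ + 1. Then ∫_T (1-x-y)^{α₀} x^{α₁} y^{α₂} / (1-y)^{β₂} d(x,y) = (α₀! α₁! α₂! · (α₀+α₁+1-β₂)!) / ((α₀+α₁+α₂-β₂+2)! · (α₀+α₁+1)!), where the integral is the Lebesgue integral over the standard triangle T. -/

import Mathlib

open MeasureTheory

open intervalIntegral in
private 
lemma beta_nat (b a : ℕ) : ∫ x in (0:ℝ)..1, x ^ a * (1 - x) ^ b
    = (a.factorial * b.factorial : ℝ) / (a + b + 1).factorial := by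
  induction b generalizing a with
  | zero =>
    simp only [integral_pow, Nat.factorial_succ, pow_zero, mul_one, Nat.add_zero, Nat.factorial_zero, Nat.mul_one, one_pow]
    have : ((a:ℝ)+1) ≠ 0 := by positivity
    have : (a.factorial : ℝ) ≠ 0 := by positivity
    push_cast
    field_simp
    simp
  | succ b ih =>
    have hu : ∀ x ∈ Set.uIcc (0:ℝ) 1, HasDerivAt (fun x : ℝ => (1 - x) ^ (b + 1))
        (((b+1 : ℕ) : ℝ) * (1 - x) ^ b * (-1)) x := by
      intro x _
      exact (((hasDerivAt_id x).const_sub 1).pow (b+1)).congr_deriv (by simp)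
    have hv : ∀ x ∈ Set.uIcc (0:ℝ) 1, HasDerivAt (fun x : ℝ => x ^ (a + 1) / (a+1 : ℕ))
        (x ^ a) x := by
      intro x _
      have := (hasDerivAt_pow (a+1) x).div_const ((a+1 : ℕ) : ℝ)
      convert this using 1
      rfl
      rfl
      rw [Nat.add_sub_cancel, mul_div_cancel_left₀ _ (by positivity)]
    have hIBP := intervalIntegral.integral_mul_deriv_eq_deriv_mul hu hv
      (by apply Continuous.intervalIntegrable; continuity)
      (by apply Continuous.intervalIntegrable; continuity)
    have : ∫ x in (0:ℝ)..1, x ^ a * (1 - x) ^ (b+1)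
        = ∫ x in (0:ℝ)..1, (1 - x) ^ (b+1) * x ^ a := by
      congr 1; ext x; ring
    rw [this, hIBP]
    have : ∫ x in (0:ℝ)..1, ((b+1 : ℕ) : ℝ) * (1 - x) ^ b * (-1) * (x ^ (a+1) / (a+1 : ℕ))
        = (-((b+1:ℕ):ℝ)/((a+1:ℕ):ℝ)) * ∫ x in (0:ℝ)..1, x ^ (a+1) * (1 - x) ^ b := by
      rw [← intervalIntegral.integral_const_mul]
      congr 1; ext x; field_simp
    rw [this, ih (a+1)]
    have h1 : ((a+1).factorial : ℝ) = (a+1) * a.factorial := by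
      rw [Nat.factorial_succ]; push_cast; ring
    have h2 : ((b+1).factorial : ℝ) = (b+1) * b.factorial := by
      rw [Nat.factorial_succ]; push_cast; ring
    have h3 : (a + 1 + b + 1) = (a + (b+1) + 1) := by omega
    rw [h3] at *
    have hf : ((a + (b+1) + 1).factorial : ℝ) ≠ 0 := by positivity
    have ha : ((a:ℝ)+1) ≠ 0 := by positivity
    field_simp [h1, h2]
    rw [h1, h2]
    simp only [sub_self, sub_zero, one_pow, ne_eq, Nat.add_eq_zero_iff, one_ne_zero, and_false, not_false_eq_true, zero_pow, zero_mul, mul_zero, zero_sub, neg_neg]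
    push_cast
    ring


open intervalIntegral in
private lemma beta_scaled (a b : ℕ) (c : ℝ) (hc : 0 ≤ c) :
    ∫ x in (0:ℝ)..c, x ^ a * (c - x) ^ b
      = c ^ (a + b + 1) * ((a.factorial * b.factorial : ℝ) / (a + b + 1).factorial) := by
  rcases eq_or_lt_of_le hc with rfl | hc
  · simp
  · have key := intervalIntegral.smul_integral_comp_mul_right
      (f := fun x : ℝ => x ^ a * (c - x) ^ b) (a := 0) (b := 1) c
    simp only [zero_mul, one_mul] at key
    rw [← key]
    have : ∀ x : ℝ, (x * c) ^ a * (c - x * c) ^ b = c ^ (a + b) * (x ^ a * (1 - x) ^ b) := by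
      intro x
      have : c - x * c = c * (1 - x) := by ring
      rw [this, mul_pow, mul_pow]
      ring
    simp only [this]
    rw [intervalIntegral.integral_const_mul, beta_nat]
    rw [smul_eq_mul]
    ring

/-- Exact integral of `λ₀^{α₀} λ₁^{α₁} λ₂^{α₂} / (1-λ₂)^{β₂}` over the standard triangle. -/
theorem triangle_rational_integral_special (α₀ α₁ α₂ β₂ : ℕ) (h : β₂ ≤ α₀ + α₁ + 1) :
    (∫ q in {q : ℝ × ℝ | 0 ≤ q.1 ∧ 0 ≤ q.2 ∧ q.1 + q.2 ≤ 1},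
        (1 - q.1 - q.2) ^ α₀ * q.1 ^ α₁ * q.2 ^ α₂ / (1 - q.2) ^ β₂) =
      ((α₀.factorial * α₁.factorial * α₂.factorial * (α₀ + α₁ + 1 - β₂).factorial : ℕ) : ℝ) /
        (((α₀ + α₁ + α₂ + 2 - β₂).factorial * (α₀ + α₁ + 1).factorial : ℕ) : ℝ) := by
  set S : Set (ℝ × ℝ) := {q : ℝ × ℝ | 0 ≤ q.1 ∧ 0 ≤ q.2 ∧ q.1 + q.2 ≤ 1} with hSdef
  set f : ℝ × ℝ → ℝ := fun q => (1 - q.1 - q.2) ^ α₀ * q.1 ^ α₁ * q.2 ^ α₂ / (1 - q.2) ^ β₂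
    with hfdef
  set m : ℕ := α₀ + α₁ + 1 - β₂ with hm
  set B : ℝ := (α₁.factorial * α₀.factorial : ℝ) / (α₁ + α₀ + 1).factorial with hB
  set G : ℝ → ℝ := fun y => y ^ α₂ * (1 - y) ^ m * B with hG
  have hS : MeasurableSet S := by
    apply MeasurableSet.inter
    · exact measurableSet_le measurable_const measurable_fst
    apply MeasurableSet.inter
    · exact measurableSet_le measurable_const measurable_snd
    · exact measurableSet_le (measurable_fst.add measurable_snd) measurable_const
  have hfm : Measurable f := by
    apply Measurable.div
    · exact (((measurable_const.sub measurable_fst).sub measurable_snd).pow_const α₀).mul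
        ((measurable_fst.pow_const α₁))|>.mul (measurable_snd.pow_const α₂)
    · exact (measurable_const.sub measurable_snd).pow_const β₂
  -- sections
  have sec_eq : ∀ y : ℝ, (fun x => S.indicator f (x, y))
      = Set.indicator {x : ℝ | 0 ≤ x ∧ 0 ≤ y ∧ x + y ≤ 1} (fun x => f (x, y)) := by
    intro y; funext x
    simp [Set.indicator_apply, hSdef, Set.mem_setOf_eq]
  have set_pos : ∀ y : ℝ, 0 ≤ y →
      {x : ℝ | 0 ≤ x ∧ 0 ≤ y ∧ x + y ≤ 1} = Set.Icc (0:ℝ) (1 - y) := by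
    intro y hy; ext x
    simp only [Set.mem_setOf_eq, Set.mem_Icc]
    constructor
    · rintro ⟨h1, _, h3⟩; exact ⟨h1, by linarith⟩
    · rintro ⟨h1, h2⟩; exact ⟨h1, hy, by linarith⟩
  have set_neg : ∀ y : ℝ, y < 0 → {x : ℝ | 0 ≤ x ∧ 0 ≤ y ∧ x + y ≤ 1} = (∅ : Set ℝ) := by
    intro y hy; ext x
    simp only [Set.mem_setOf_eq, Set.mem_empty_iff_false, iff_false]
    rintro ⟨_, h2, _⟩; linarith
  have secnn : ∀ y x : ℝ, 0 ≤ S.indicator f (x, y) := by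
    intro y x
    apply Set.indicator_apply_nonneg
    rintro ⟨h1, h2, h3⟩
    simp only [hfdef]
    dsimp only at h1 h2 h3 ⊢
    have h4 : (0:ℝ) ≤ 1 - x - y := by linarith
    have h5 : (0:ℝ) ≤ 1 - y := by linarith
    exact div_nonneg (mul_nonneg (mul_nonneg (pow_nonneg h4 _) (pow_nonneg h1 _))
      (pow_nonneg h2 _)) (pow_nonneg h5 _)
  have seccont : ∀ y : ℝ, Continuous fun x : ℝ => f (x, y) := by
    intro y
    simp only [hfdef]
    apply Continuous.div_const
    exact (((continuous_const.sub continuous_id).sub continuous_const).pow α₀).mul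
      ((continuous_id.pow α₁)) |>.mul continuous_const
  have sec_int : ∀ y : ℝ, Integrable (fun x => S.indicator f (x, y)) := by
    intro y
    rw [sec_eq y]
    rcases le_or_gt 0 y with hy | hy
    · rw [set_pos y hy]
      exact ((seccont y).integrableOn_Icc).integrable_indicator measurableSet_Icc
    · rw [set_neg y hy]; simp
  -- inner integral computation
  have inner_eq : ∀ y : ℝ, 0 ≤ y → y < 1 → ∫ x, S.indicator f (x, y) = G y := by
    intro y h0 h1
    have h1y : (0:ℝ) ≤ 1 - y := by linarith
    have hne : (1 - y) ≠ 0 := by linarith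
    rw [sec_eq y, MeasureTheory.integral_indicator (by rw [set_pos y h0]; exact measurableSet_Icc),
      set_pos y h0, integral_Icc_eq_integral_Ioc, ← intervalIntegral.integral_of_le h1y]
    have : ∀ x : ℝ, f (x, y) = x ^ α₁ * ((1 - y) - x) ^ α₀ * (y ^ α₂ / (1 - y) ^ β₂) := by
      intro x
      simp only [hfdef]
      have : (1 - x - y) = ((1 - y) - x) := by ring
      rw [this]; ring
    simp only [this]
    rw [intervalIntegral.integral_mul_const, beta_scaled α₁ α₀ _ h1y]
    have hpow : (1 - y) ^ (α₁ + α₀ + 1) = (1 - y) ^ m * (1 - y) ^ β₂ := by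
      rw [← pow_add]
      congr 1
      omega
    rw [hpow, hG, hB]
    field_simp
  have inner_zero : ∀ y : ℝ, y < 0 ∨ 1 < y → ∫ x, S.indicator f (x, y) = 0 := by
    intro y hy
    rw [sec_eq y]
    rcases hy with hy | hy
    · rw [set_neg y hy]; simp
    · rw [set_pos y (by linarith), Set.Icc_eq_empty (by simp; linarith)]; simp
  have hae1 : ∀ᵐ y : ℝ, y ≠ (1:ℝ) := by
    rw [MeasureTheory.ae_iff]
    have : {y : ℝ | ¬ y ≠ 1} = {(1:ℝ)} := by ext y; simp
    rw [this]
    exact Real.volume_singleton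
  have E : (fun y => ∫ x, S.indicator f (x, y)) =ᵐ[volume] (Set.Icc (0:ℝ) 1).indicator G := by
    filter_upwards [hae1] with y hy
    rcases le_or_gt 0 y with h0 | h0
    · rcases le_or_gt y 1 with h1 | h1
      · have h1' : y < 1 := lt_of_le_of_ne h1 hy
        rw [inner_eq y h0 h1', Set.indicator_of_mem (Set.mem_Icc.2 ⟨h0, h1⟩)]
      · rw [inner_zero y (Or.inr h1), Set.indicator_of_notMem (by simp [Set.mem_Icc]; intro; linarith)]
    · rw [inner_zero y (Or.inl h0), Set.indicator_of_notMem (by simp [Set.mem_Icc]; intro; linarith)]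
  have hGint : Integrable ((Set.Icc (0:ℝ) 1).indicator G) := by
    have hGc : Continuous G := by
      simp only [hG]
      exact (((continuous_id.pow α₂).mul ((continuous_const.sub continuous_id).pow m)).mul
        continuous_const)
    exact (hGc.integrableOn_Icc).integrable_indicator measurableSet_Icc
  -- integrability on the product
  have hIint : Integrable (S.indicator f) ((volume : Measure ℝ).prod volume) := by
    rw [integrable_prod_iff' ((hfm.indicator hS).aestronglyMeasurable)]
    constructor
    · exact Filter.Eventually.of_forall sec_int
    · have hnorm : (fun y => ∫ x, ‖S.indicator f (x, y)‖)
          = fun y => ∫ x, S.indicator f (x, y) := by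
        funext y
        congr 1
        funext x
        exact Real.norm_of_nonneg (secnn y x)
      rw [hnorm]
      exact hGint.congr E.symm
  -- main computation
  rw [← MeasureTheory.integral_indicator hS, MeasureTheory.Measure.volume_eq_prod,
    MeasureTheory.integral_prod_symm _ hIint, integral_congr_ae E,
    MeasureTheory.integral_indicator measurableSet_Icc, integral_Icc_eq_integral_Ioc,
    ← intervalIntegral.integral_of_le (by norm_num : (0:ℝ) ≤ 1)]
  simp only [hG]
  rw [intervalIntegral.integral_mul_const, beta_nat m α₂]
  have e1 : α₂ + m + 1 = α₀ + α₁ + α₂ + 2 - β₂ := by omega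
  have e2 : α₁ + α₀ + 1 = α₀ + α₁ + 1 := by omega
  rw [e1, hB, e2]
  push_cast
  ring
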